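/- If a hereditary family F of graphs and the family of complements of graphs in F both have the homogeneous density property, then F has the mighty Erdős–Hajnal property. -/
import Mathlib


/-- A family of finite simple graphs, given as a predicate on graphs over every finite
vertex type. -/
abbrev GraphFamily : Type 1 := ∀ (V : Type) [Fintype V], SimpleGraph V → Prop

/-- A family of graphs is hereditary if it is closed under taking induced subgraphs. -/
def Hereditary (F : GraphFamily) : Prop :=
  ∀ (V : Type) [Fintype V] (G : SimpleGraph V), F V G →
    ∀ (s : Set V) [Fintype ↥s], F ↥s (G.induce s)

/-- The bipartite graph between `A` and `B` is complete or empty. -/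
def HomogPair {V : Type} (G : SimpleGraph V) (A B : Finset V) : Prop :=
  (∀ a ∈ A, ∀ b ∈ B, G.Adj a b) ∨ (∀ a ∈ A, ∀ b ∈ B, ¬ G.Adj a b)

/-- The number of (ordered) adjacent pairs between `A` and `B`. -/
noncomputable def crossCount {V : Type} (G : SimpleGraph V) (A B : Finset V) : ℕ :=
  {p : V × V | p.1 ∈ A ∧ p.2 ∈ B ∧ G.Adj p.1 p.2}.ncard

/-- The mighty Erdős–Hajnal property: there is `c > 0` such that for every graph in the family
and all disjoint vertex subsets `A, B` of equal size, there are `A' ⊆ A`, `B' ⊆ B` with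
`|A'| ≥ c|A|`, `|B'| ≥ c|B|` that are complete or empty to each other. -/
def MightyEH (F : GraphFamily) : Prop :=
  ∃ c : ℝ, 0 < c ∧
    ∀ (V : Type) [Fintype V] (G : SimpleGraph V), F V G →
      ∀ A B : Finset V, Disjoint A B → A.card = B.card →
        ∃ A' ⊆ A, ∃ B' ⊆ B,
          c * A.card ≤ (A'.card : ℝ) ∧ c * B.card ≤ (B'.card : ℝ) ∧ HomogPair G A' B'

/-- The homogeneous regularity property: for every `ε > 0` there is `K` such that every graph
in the family has an equipartition into `K` parts such that all but at most `ε K²` pairs of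
distinct parts are complete or empty to each other. -/
def HomogReg (F : GraphFamily) : Prop :=
  ∀ ε : ℝ, 0 < ε → ∃ K : ℕ, 0 < K ∧
    ∀ (V : Type) [Fintype V] (G : SimpleGraph V), F V G →
      ∃ P : Fin K → Finset V,
        (∀ i j, i ≠ j → Disjoint (P i) (P j)) ∧
        (∀ v : V, ∃ i, v ∈ P i) ∧
        (∀ i j, (P i).card ≤ (P j).card + 1) ∧
        ({p : Fin K × Fin K | p.1 ≠ p.2 ∧ ¬ HomogPair G (P p.1) (P p.2)}.ncard : ℝ)
          ≤ ε * K ^ 2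

/-- The homogeneous density property: for every `ε > 0` there is `C = C(ε)` such that for every
graph in the family and disjoint equal-size subsets `A, B` with at least `ε|A||B|` edges between
them, there are `A' ⊆ A`, `B' ⊆ B` of sizes at least `ε^C |A|`, `ε^C |B|` that are complete to
each other. -/
def HomogDensity (F : GraphFamily) : Prop :=
  ∀ ε : ℝ, 0 < ε → ε ≤ 1 → ∃ C : ℝ, 0 < C ∧
    ∀ (V : Type) [Fintype V] (G : SimpleGraph V), F V G →
      ∀ A B : Finset V, Disjoint A B → A.card = B.card →
        ε * A.card * B.card ≤ (crossCount G A B : ℝ) →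
        ∃ A' ⊆ A, ∃ B' ⊆ B,
          ε ^ C * A.card ≤ (A'.card : ℝ) ∧ ε ^ C * B.card ≤ (B'.card : ℝ) ∧
          ∀ a ∈ A', ∀ b ∈ B', G.Adj a b

/-- The family of complements of graphs in `F`. -/
def ComplFamily (F : GraphFamily) : GraphFamily :=
  fun V inst G => @F V inst Gᶜ

/-- If a hereditary family `F` of graphs and the family of complements of graphs in `F` both
have the homogeneous density property, then `F` has the mighty Erdős–Hajnal property. -/
lemma crossCount_add_compl {V : Type} [Fintype V] (G : SimpleGraph V) (A B : Finset V)
    (hd : Disjoint A B) :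
    crossCount G A B + crossCount Gᶜ A B = A.card * B.card := by
  classical
  have hset : ∀ (H : SimpleGraph V),
      {p : V × V | p.1 ∈ A ∧ p.2 ∈ B ∧ H.Adj p.1 p.2}
        = ↑((A ×ˢ B).filter fun p => H.Adj p.1 p.2) := by
    intro H; ext p; simp [Finset.mem_product, and_assoc]
  have h1 : crossCount G A B = ((A ×ˢ B).filter fun p => G.Adj p.1 p.2).card := by
    rw [crossCount, hset, Set.ncard_coe_finset]
  have h2 : crossCount Gᶜ A B = ((A ×ˢ B).filter fun p => ¬ G.Adj p.1 p.2).card := by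
    rw [crossCount, hset, Set.ncard_coe_finset]
    congr 1
    ext p
    simp only [Finset.mem_filter, Finset.mem_product, SimpleGraph.compl_adj]
    constructor
    · rintro ⟨⟨ha, hb⟩, _, hn⟩; exact ⟨⟨ha, hb⟩, hn⟩
    · rintro ⟨⟨ha, hb⟩, hn⟩
      exact ⟨⟨ha, hb⟩, fun h => Finset.disjoint_left.mp hd ha (h ▸ hb), hn⟩
  rw [h1, h2, Finset.card_filter_add_card_filter_not, Finset.card_product]

theorem stmt8 (F : GraphFamily) (hF : Hereditary F)
    (h₁ : HomogDensity F) (h₂ : HomogDensity (ComplFamily F)) : MightyEH F := by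
  obtain ⟨C₁, hC₁, H₁⟩ := h₁ (1/2) (by norm_num) (by norm_num)
  obtain ⟨C₂, hC₂, H₂⟩ := h₂ (1/2) (by norm_num) (by norm_num)
  have p1 : (0:ℝ) < (1/2 : ℝ) ^ C₁ := Real.rpow_pos_of_pos (by norm_num) _
  have p2 : (0:ℝ) < (1/2 : ℝ) ^ C₂ := Real.rpow_pos_of_pos (by norm_num) _
  refine ⟨min ((1/2:ℝ) ^ C₁) ((1/2:ℝ) ^ C₂), lt_min p1 p2, ?_⟩
  intro V _ G hG A B hd hcard
  have hsum := crossCount_add_compl G A B hd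
  by_cases hc : (1/2 : ℝ) * A.card * B.card ≤ (crossCount G A B : ℝ)
  · obtain ⟨A', hA', B', hB', hA'c, hB'c, hadj⟩ := H₁ V G hG A B hd hcard hc
    refine ⟨A', hA', B', hB', ?_, ?_, Or.inl hadj⟩
    · exact le_trans (mul_le_mul_of_nonneg_right (min_le_left _ _) (by positivity)) hA'c
    · exact le_trans (mul_le_mul_of_nonneg_right (min_le_left _ _) (by positivity)) hB'c
  · push_neg at hc
    have hc' : (1/2 : ℝ) * A.card * B.card ≤ (crossCount Gᶜ A B : ℝ) := by
      have : (crossCount G A B : ℝ) + (crossCount Gᶜ A B : ℝ) = (A.card : ℝ) * B.card := by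
        exact_mod_cast hsum
      linarith
    have hG' : ComplFamily F V Gᶜ := by
      show F V Gᶜᶜ
      rwa [compl_compl]
    obtain ⟨A', hA', B', hB', hA'c, hB'c, hadj⟩ := H₂ V Gᶜ hG' A B hd hcard hc'
    refine ⟨A', hA', B', hB', ?_, ?_, Or.inr ?_⟩
    · exact le_trans (mul_le_mul_of_nonneg_right (min_le_right _ _) (by positivity)) hA'c
    · exact le_trans (mul_le_mul_of_nonneg_right (min_le_right _ _) (by positivity)) hB'c
    · intro a ha b hb hab
      exact (hadj a ha b hb).2 hab
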